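/- In the rational function field 𝔽₂(z), the set S = { p*(z)/p(z) : p ∈ 𝔽₂[z], p ≠ 0, deg p < n } (with p*(z) = z^{n−1}p(1/z)) equals the set T = { z^k · ũ(z)/u(z) : u ∈ 𝔽₂[z], deg u < n, u(0) = 1, gcd(u, ũ) = 1, |k| ≤ n−1−deg u }, where ũ(z) = z^{deg u} u(1/z) and k ranges over integers. Moreover, each element of T is uniquely determined by the pair (k, u). -/

import Mathlib

open Polynomial

namespace Stmt11Aux

local notation "R" => Polynomial (ZMod 2)
local notation "K" => RatFunc (ZMod 2)
local notation "φ" => algebraMap (Polynomial (ZMod 2)) (RatFunc (ZMod 2))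

lemma zmod2_eq_one {x : ZMod 2} (h : x ≠ 0) : x = 1 := by revert x; decide

lemma monic2 {p : R} (hp : p ≠ 0) : p.Monic :=
  zmod2_eq_one (leadingCoeff_ne_zero.mpr hp)

lemma eq_of_dvd2 {u w : R} (hu : u ≠ 0) (hw : w ≠ 0) (h1 : u ∣ w) (h2 : w ∣ u) : u = w :=
  eq_of_monic_of_associated (monic2 hu) (monic2 hw) (associated_of_dvd_dvd h1 h2)

lemma reflect_eq_rev {p : R} {N : ℕ} (h : p.natDegree ≤ N) :
    p.reflect N = p.reverse * X ^ (N - p.natDegree) := by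
  have h1 : (1 : R).natDegree ≤ N - p.natDegree := by simp
  have := reflect_mul p 1 le_rfl h1
  rw [mul_one, reflect_one] at this
  rw [reverse, ← this]
  congr 1
  omega

lemma rev_rev {p : R} (h : p.coeff 0 ≠ 0) : p.reverse.reverse = p := by
  have htr : p.natTrailingDegree = 0 := natTrailingDegree_eq_zero.mpr (Or.inr h)
  have hdeg : p.reverse.natDegree = p.natDegree := by
    rw [reverse_natDegree, htr, Nat.sub_zero]
  ext n
  by_cases hn : n ≤ p.natDegree
  · rw [coeff_reverse, coeff_reverse, hdeg, revAt_invol]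
  · rw [coeff_eq_zero_of_natDegree_lt (by omega : p.natDegree < n),
      coeff_eq_zero_of_natDegree_lt]
    calc p.reverse.reverse.natDegree ≤ p.reverse.natDegree := reverse_natDegree_le _
      _ = p.natDegree := hdeg
      _ < n := by omega

lemma rev_X_add_one : ((X : R) + 1).reverse = X + 1 := by
  have h1 : ((X : R) + 1).natDegree = 1 := by
    simpa using natDegree_X_add_C (1 : ZMod 2)
  rw [reverse, h1, reflect_add, reflect_one_X, reflect_one, pow_one, add_comm]

lemma rev_X_add_one_pow (ε : ℕ) : (((X : R) + 1) ^ ε).reverse = (X + 1) ^ ε := by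
  induction ε with
  | zero => simp [reverse, reflect_one]
  | succ m ih => rw [pow_succ, reverse_mul_of_domain, ih, rev_X_add_one]

lemma ratio_eq (b a : ℕ) (c r u : R) (hc : c ≠ 0) (hu : u ≠ 0) :
    φ (c * r * X ^ b) / φ (X ^ a * (c * u))
      = (RatFunc.X : K) ^ ((b : ℤ) - (a : ℤ)) * φ r / φ u := by
  have ht : (RatFunc.X : K) ≠ 0 := RatFunc.X_ne_zero
  have hc' : φ c ≠ 0 := RatFunc.algebraMap_ne_zero hc
  have hu' : φ u ≠ 0 := RatFunc.algebraMap_ne_zero hu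
  rw [map_mul, map_mul, map_mul, map_pow, map_pow, RatFunc.algebraMap_X,
    zpow_sub₀ ht, zpow_natCast, zpow_natCast]
  field_simp
  rw [map_mul]; ring

lemma S_subset_T (n : ℕ) (p : R) (hp : p ≠ 0) (hpn : p.natDegree < n) :
    ∃ (k : ℤ) (u : R), u.natDegree < n ∧ u.coeff 0 = 1 ∧ IsCoprime u u.reverse ∧
      k.natAbs + u.natDegree ≤ n - 1 ∧
      φ (p.reflect (n - 1)) / φ p = (RatFunc.X : K) ^ k * φ u.reverse / φ u := by
  obtain ⟨q, hq, hndvd⟩ := p.exists_eq_pow_rootMultiplicity_mul_and_not_dvd hp 0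
  set a := p.rootMultiplicity 0 with ha
  rw [C_0, sub_zero] at hq hndvd
  have hq0 : q ≠ 0 := by rintro rfl; rw [mul_zero] at hq; exact hp hq
  have hqc : q.coeff 0 = 1 := zmod2_eq_one (fun h => hndvd (X_dvd_iff.mpr h))
  set g := EuclideanDomain.gcd q q.reverse with hg
  have hgq : g ∣ q := EuclideanDomain.gcd_dvd_left _ _
  have hgr : g ∣ q.reverse := EuclideanDomain.gcd_dvd_right _ _
  have hgne : g ≠ 0 := fun h => hq0 ((EuclideanDomain.gcd_eq_zero_iff.mp h).1)
  obtain ⟨m, hm⟩ := hgq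
  have hmne : m ≠ 0 := fun h => hq0 (by rw [hm, h, mul_zero])
  have hgm : g.coeff 0 = 1 ∧ m.coeff 0 = 1 := by
    have h2 : ∀ x y : ZMod 2, x * y = 1 → x = 1 ∧ y = 1 := by decide
    have := hqc; rw [hm, mul_coeff_zero] at this
    exact h2 _ _ this
  have grevdvd : g.reverse ∣ q.reverse := by
    rw [hm, reverse_mul_of_domain]; exact dvd_mul_right _ _
  have grevdvdq : g.reverse ∣ q := by
    obtain ⟨m', hm'⟩ := hgr
    rw [← rev_rev (p := q) (by rw [hqc]; exact one_ne_zero), hm', reverse_mul_of_domain]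
    exact dvd_mul_right _ _
  have grevg : g.reverse ∣ g := EuclideanDomain.dvd_gcd grevdvdq grevdvd
  have hgrevne : g.reverse ≠ 0 := by rwa [Ne, reverse_eq_zero]
  have hdeg : g.natDegree ≤ g.reverse.natDegree := by
    rw [reverse_natDegree,
      natTrailingDegree_eq_zero.mpr (Or.inr (by rw [hgm.1]; exact one_ne_zero))]
    omega
  have grev_eq : g.reverse = g := by
    obtain ⟨c, hc⟩ := grevg
    have hcne : c ≠ 0 := fun h => hgne (by rw [hc, h, mul_zero])
    have hdc := congrArg natDegree hc
    rw [natDegree_mul hgrevne hcne] at hdc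
    have hrle := reverse_natDegree_le g
    have hc0 : c.natDegree = 0 := by omega
    have hc1 : c = 1 := (Polynomial.Monic.natDegree_eq_zero (monic2 hcne)).mp hc0
    rw [hc1, mul_one] at hc
    exact hc.symm
  have hrevq : q.reverse = g * m.reverse := by
    rw [hm, reverse_mul_of_domain, grev_eq]
  have hcop : IsCoprime m m.reverse := by
    have hbez := EuclideanDomain.gcd_eq_gcd_ab q q.reverse
    refine ⟨EuclideanDomain.gcdA q q.reverse, EuclideanDomain.gcdB q q.reverse, ?_⟩
    rw [← hg] at hbez
    have hgg : g * 1 = g * (m * EuclideanDomain.gcdA q q.reverse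
        + m.reverse * EuclideanDomain.gcdB q q.reverse) := by
      rw [mul_one]
      nth_rewrite 1 [hbez]
      rw [hrevq, hm]; ring
    have := mul_left_cancel₀ hgne hgg
    linear_combination this.symm
  have hdq : q.natDegree = g.natDegree + m.natDegree := by
    rw [hm, natDegree_mul hgne hmne]
  have hdp : p.natDegree = a + q.natDegree := by
    rw [hq, natDegree_mul (pow_ne_zero _ X_ne_zero) hq0, natDegree_X_pow]
  refine ⟨((n - 1 - p.natDegree : ℕ) : ℤ) - (a : ℤ), m, by omega, hgm.2, hcop, by omega, ?_⟩
  have hrefl : p.reflect (n - 1) = g * m.reverse * X ^ (n - 1 - p.natDegree) := by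
    rw [reflect_eq_rev (by omega : p.natDegree ≤ n - 1)]
    congr 1
    rw [hq, reverse_X_pow_mul, hrevq]
  rw [hrefl, hq, hm, ratio_eq _ a g m.reverse m hgne hmne]

lemma T_subset_S (n : ℕ) (k : ℤ) (u : R) (hun : u.natDegree < n) (hu0 : u.coeff 0 = 1)
    (hk : k.natAbs + u.natDegree ≤ n - 1) :
    ∃ p : R, p ≠ 0 ∧ p.natDegree < n ∧
      (RatFunc.X : K) ^ k * φ u.reverse / φ u = φ (p.reflect (n - 1)) / φ p := by
  have hune : u ≠ 0 := fun h => by simp [h] at hu0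
  have hXone : ((X : R) + 1) ≠ 0 := fun h => by
    have := congrArg (fun q => Polynomial.coeff q 0) h; simp at this
  set D := n - 1 - u.natDegree with hD
  set e := ((D : ℤ) - k).toNat with he
  set ε := e % 2 with hε
  set a := e / 2 with haa
  have hε1 : ε ≤ 1 := by omega
  have hdeg1 : ((X : R) + 1).natDegree = 1 := by
    simpa using natDegree_X_add_C (1 : ZMod 2)
  set p := X ^ a * (((X : R) + 1) ^ ε * u) with hpdef
  have hpne : p ≠ 0 :=
    mul_ne_zero (pow_ne_zero _ X_ne_zero) (mul_ne_zero (pow_ne_zero _ hXone) hune)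
  have hdp : p.natDegree = a + (ε + u.natDegree) := by
    rw [hpdef, natDegree_mul (pow_ne_zero _ X_ne_zero)
      (mul_ne_zero (pow_ne_zero _ hXone) hune), natDegree_X_pow,
      natDegree_mul (pow_ne_zero _ hXone) hune, natDegree_pow, hdeg1, mul_one]
  have hdpn : p.natDegree ≤ n - 1 := by rw [hdp]; omega
  refine ⟨p, hpne, by omega, ?_⟩
  have hrefl : p.reflect (n - 1) = ((X : R) + 1) ^ ε * u.reverse * X ^ (n - 1 - p.natDegree) := by
    rw [reflect_eq_rev hdpn]
    congr 1
    rw [hpdef, reverse_X_pow_mul, reverse_mul_of_domain, rev_X_add_one_pow]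
  rw [hrefl, hpdef, ratio_eq _ a _ u.reverse u (pow_ne_zero _ hXone) hune]
  have hexp : ((n - 1 - p.natDegree : ℕ) : ℤ) - (a : ℤ) = k := by
    have := hdp; omega
  rw [hexp]

lemma uniq (k l : ℤ) (u w : R) (hu0 : u.coeff 0 = 1) (hucop : IsCoprime u u.reverse)
    (hw0 : w.coeff 0 = 1) (hwcop : IsCoprime w w.reverse) (hlk : l ≤ k)
    (heq : (RatFunc.X : K) ^ k * φ u.reverse / φ u
      = (RatFunc.X : K) ^ l * φ w.reverse / φ w) :
    k = l ∧ u = w := by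
  have hune : u ≠ 0 := fun h => by simp [h] at hu0
  have hwne : w ≠ 0 := fun h => by simp [h] at hw0
  have hu' : φ u ≠ 0 := RatFunc.algebraMap_ne_zero hune
  have hw' : φ w ≠ 0 := RatFunc.algebraMap_ne_zero hwne
  have ht : (RatFunc.X : K) ≠ 0 := RatFunc.X_ne_zero
  set d := (k - l).toNat with hd
  rw [div_eq_div_iff hu' hw'] at heq
  have hkk : (RatFunc.X : K) ^ k = RatFunc.X ^ l * (RatFunc.X : K) ^ d := by
    rw [← zpow_natCast (RatFunc.X : K) d, ← zpow_add₀ ht]; congr 1; omega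
  rw [hkk] at heq
  have heq2 : (RatFunc.X : K) ^ d * φ u.reverse * φ w = φ u * φ w.reverse := by
    apply mul_left_cancel₀ (zpow_ne_zero l ht)
    linear_combination heq
  have hpoly : (X : R) ^ d * (u.reverse * w) = u * w.reverse := by
    apply RatFunc.algebraMap_injective (ZMod 2)
    rw [map_mul, map_mul, map_mul, map_pow, RatFunc.algebraMap_X, ← mul_assoc]
    exact heq2
  have hd0 : d = 0 := by
    by_contra hcon
    have hdvd : (X : R) ∣ u * w.reverse :=
      hpoly ▸ (dvd_pow_self (X : R) hcon).mul_right _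
    rw [X_dvd_iff, mul_coeff_zero, hu0, one_mul, coeff_zero_reverse] at hdvd
    exact leadingCoeff_ne_zero.mpr hwne hdvd
  rw [hd0, pow_zero, one_mul] at hpoly
  have h1 : u ∣ w := hucop.dvd_of_dvd_mul_left ⟨w.reverse, hpoly⟩
  have h2 : w ∣ u := hwcop.dvd_of_dvd_mul_left ⟨u.reverse, by linear_combination -hpoly⟩
  exact ⟨by omega, eq_of_dvd2 hune hwne h1 h2⟩

end Stmt11Aux

open Stmt11Aux in
/-- In `𝔽₂(z)`, the set `S = { p*/p : 0 ≠ p ∈ 𝔽₂[z], deg p < n }` (with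
`p* = z^(n−1) p(1/z) = reflect (n−1) p`) equals the set
`T = { z^k · ũ/u : deg u < n, u(0) = 1, gcd(u, ũ) = 1, |k| ≤ n−1−deg u }`,
and each element of `T` is uniquely determined by the pair `(k, u)`. -/
theorem stmt11 (n : ℕ) :
    ({x : RatFunc (ZMod 2) | ∃ p : Polynomial (ZMod 2), p ≠ 0 ∧ p.natDegree < n ∧
        x = (algebraMap (Polynomial (ZMod 2)) (RatFunc (ZMod 2)) (p.reflect (n - 1))) /
            (algebraMap (Polynomial (ZMod 2)) (RatFunc (ZMod 2)) p)}
      = {x : RatFunc (ZMod 2) | ∃ (k : ℤ) (u : Polynomial (ZMod 2)),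
          u.natDegree < n ∧ u.coeff 0 = 1 ∧ IsCoprime u u.reverse ∧
          k.natAbs + u.natDegree ≤ n - 1 ∧
          x = (RatFunc.X : RatFunc (ZMod 2)) ^ k *
              (algebraMap (Polynomial (ZMod 2)) (RatFunc (ZMod 2)) u.reverse) /
              (algebraMap (Polynomial (ZMod 2)) (RatFunc (ZMod 2)) u)}) ∧
    (∀ (k l : ℤ) (u w : Polynomial (ZMod 2)),
      u.natDegree < n → u.coeff 0 = 1 → IsCoprime u u.reverse →
        k.natAbs + u.natDegree ≤ n - 1 →
      w.natDegree < n → w.coeff 0 = 1 → IsCoprime w w.reverse →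
        l.natAbs + w.natDegree ≤ n - 1 →
      (RatFunc.X : RatFunc (ZMod 2)) ^ k *
          (algebraMap (Polynomial (ZMod 2)) (RatFunc (ZMod 2)) u.reverse) /
          (algebraMap (Polynomial (ZMod 2)) (RatFunc (ZMod 2)) u)
        = (RatFunc.X : RatFunc (ZMod 2)) ^ l *
          (algebraMap (Polynomial (ZMod 2)) (RatFunc (ZMod 2)) w.reverse) /
          (algebraMap (Polynomial (ZMod 2)) (RatFunc (ZMod 2)) w) →
      k = l ∧ u = w) := by
  constructor
  · ext x
    simp only [Set.mem_setOf_eq]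
    constructor
    · rintro ⟨p, hp, hpn, rfl⟩
      exact S_subset_T n p hp hpn
    · rintro ⟨k, u, h1, h2, _, h4, rfl⟩
      obtain ⟨p, hp, hpn, h5⟩ := T_subset_S n k u h1 h2 h4
      exact ⟨p, hp, hpn, h5⟩
  · intro k l u w _ hu0 hucop _ _ hw0 hwcop _ heq
    rcases le_total l k with h | h
    · exact uniq k l u w hu0 hucop hw0 hwcop h heq
    · obtain ⟨h1, h2⟩ := uniq l k w u hw0 hwcop hu0 hucop h heq.symm
      exact ⟨h1.symm, h2.symm⟩
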